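/- Let M = (S, ρ) be a matroid scheme. Then for every basis x ∈ B(M), ρ(x) equals the rank ρ(M) of the matroid scheme, i.e. ρ(x) = ρ(u) for any maximal element u of S. -/

import Mathlib

/-- The set of minimal upper bounds of `x` and `y` (denoted `x ∨ y` in the paper). -/
def mub {S : Type*} [PartialOrder S] (x y : S) : Set S :=
  {u | x ≤ u ∧ y ≤ u ∧ ∀ v, x ≤ v → y ≤ v → v ≤ u → v = u}

/-- The set of maximal lower bounds of `x` and `y` (denoted `x ∧ y` in the paper). -/
def mlb {S : Type*} [PartialOrder S] (x y : S) : Set S :=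
  {l | l ≤ x ∧ l ≤ y ∧ ∀ m, m ≤ x → m ≤ y → l ≤ m → m = l}

/-- The set of minimal upper bounds of a subset `T`. -/
def mubSet {S : Type*} [PartialOrder S] (T : Set S) : Set S :=
  {u | (∀ t ∈ T, t ≤ u) ∧ ∀ v, (∀ t ∈ T, t ≤ v) → v ≤ u → v = u}

/-- The number of atoms below `x`, i.e. `|x|`, the rank of `x` in a simplicial poset. -/
noncomputable def natRank {S : Type*} [PartialOrder S] [OrderBot S] (x : S) : ℕ :=
  Nat.card {a : S // IsAtom a ∧ a ≤ x}

/-- A finite bounded-below poset is simplicial if every lower interval is isomorphic to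
the Boolean lattice of subsets of the set of atoms below. -/
def IsSimplicialPoset (S : Type*) [PartialOrder S] [OrderBot S] [Fintype S] : Prop :=
  ∀ x : S, Nonempty (Set.Iic x ≃o Set {a : S // IsAtom a ∧ a ≤ x})

/-- A matroid scheme: a rank function `ρ` on a finite simplicial poset `S`
satisfying (M1)–(M5). -/
structure IsMatroidScheme {S : Type*} [PartialOrder S] [OrderBot S] [Fintype S]
    (ρ : S → ℕ) : Prop where
  simplicial : IsSimplicialPoset S
  M1 : ∀ x : S, ρ x ≤ natRank x
  M2 : ∀ ⦃x y : S⦄, x ≤ y → ρ x ≤ ρ y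
  M3 : ∀ x y u l : S, u ∈ mub x y → l ∈ mlb x y → ρ u + ρ l ≤ ρ x + ρ y
  M4 : ∀ x y l : S, l ∈ mlb x y → ρ x = ρ l → (mub x y).Nonempty
  M5 : ∀ x y : S, ρ x < ρ y →
    ∃ a : S, IsAtom a ∧ a ≤ y ∧ ¬ a ≤ x ∧ (mub x a).Nonempty

/-- `cl` is the closure operator of a matroid scheme `(S, ρ)`:
`cl x` is the greatest element above `x` of the same rank. -/
def IsClosureFun {S : Type*} [PartialOrder S] (ρ : S → ℕ) (cl : S → S) : Prop :=
  ∀ x : S, x ≤ cl x ∧ ρ (cl x) = ρ x ∧ ∀ y : S, x ≤ y → ρ y = ρ x → y ≤ cl x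

/-- The bases of a matroid scheme: the maximal independent elements. -/
def Bases {S : Type*} [PartialOrder S] [OrderBot S] (ρ : S → ℕ) : Set S :=
  {x | ρ x = natRank x ∧ ∀ w, ρ w = natRank w → x ≤ w → w = x}

/-- The circuits of a matroid scheme: the minimal dependent elements. -/
def Circuits {S : Type*} [PartialOrder S] [OrderBot S] (ρ : S → ℕ) : Set S :=
  {x | ρ x < natRank x ∧ ∀ y, ρ y < natRank y → y ≤ x → y = x}

/-- `c` is the complement `x ∖ a` of `a` in the Boolean lattice `S_{≤ x}`. -/
def IsComplementIn {S : Type*} [PartialOrder S] [OrderBot S] (c a x : S) : Prop :=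
  c ≤ x ∧ a ≤ x ∧ (∀ l : S, l ≤ c → l ≤ a → l = ⊥) ∧
    (∀ u : S, u ≤ x → c ≤ u → a ≤ u → u = x)

/-- The rank of a matroid scheme: the common value of `ρ` on maximal elements
(equal to the maximum value of `ρ`). -/
noncomputable def schemeRank {S : Type*} [Fintype S] (ρ : S → ℕ) : ℕ :=
  sSup (Set.range ρ)

/-- The Tutte polynomial of a matroid scheme, as a two-variable integer function. -/
noncomputable def tutte {S : Type*} [PartialOrder S] [OrderBot S] [Fintype S]
    (ρ : S → ℕ) (x y : ℤ) : ℤ :=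
  ∑ w : S, (x - 1) ^ (schemeRank ρ - ρ w) * (y - 1) ^ (natRank w - ρ w)

/-- An element of a poset is an order-atom if it covers a global minimum. -/
def OrdAtom {P : Type*} [PartialOrder P] (a : P) : Prop :=
  ∃ b : P, (∀ z : P, b ≤ z) ∧ b ⋖ a

/-- A partial order is a geometric lattice: it is bounded below, every pair has a least
upper bound and greatest lower bound, it is atomistic, and it is (upper) semimodular. -/
def IsGeomLatOrder (P : Type*) [PartialOrder P] : Prop :=
  (∃ b : P, ∀ x : P, b ≤ x) ∧
  (∀ x y : P, ∃ u : P, IsLUB {x, y} u) ∧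
  (∀ x y : P, ∃ l : P, IsGLB {x, y} l) ∧
  (∀ x : P, IsLUB {a : P | OrdAtom a ∧ a ≤ x} x) ∧
  (∀ x y m j : P, IsGLB {x, y} m → IsLUB {x, y} j → m ⋖ x → y ⋖ j)

/-- A geometric poset: a finite bounded-below poset with rank function `rk`
satisfying (G1) and (G2). -/
def IsGeometricPoset (P : Type*) [PartialOrder P] [OrderBot P] [Fintype P]
    (rk : P → ℕ) : Prop :=
  rk ⊥ = 0 ∧
  (∀ ⦃x y : P⦄, x ≤ y → rk x ≤ rk y) ∧
  (∀ x y : P, x ⋖ y → rk y = rk x + 1) ∧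
  (∀ m : P, IsMax m → IsGeomLatOrder (Set.Iic m)) ∧
  (∀ (x : P) (A : Set P), (∀ a ∈ A, IsAtom a) →
    ∀ y ∈ mubSet A, rk x < rk y → rk y = Nat.card A →
      ∃ a ∈ A, ¬ a ≤ x ∧ ∃ w : P, x ≤ w ∧ a ≤ w)

section Aux

variable {S : Type*} [PartialOrder S] [OrderBot S]

lemma natRank_bot' : natRank (⊥ : S) = 0 := by
  have : IsEmpty {a : S // IsAtom a ∧ a ≤ ⊥} :=
    ⟨fun ⟨a, ha, hle⟩ => ha.1 (le_bot_iff.mp hle)⟩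
  rw [natRank]
  exact Nat.card_of_isEmpty

lemma natRank_atom' {a : S} (ha : IsAtom a) : natRank a = 1 := by
  have h1 : Nonempty {b : S // IsAtom b ∧ b ≤ a} := ⟨⟨a, ha, le_rfl⟩⟩
  have h2 : Subsingleton {b : S // IsAtom b ∧ b ≤ a} := by
    constructor
    rintro ⟨b, hb, hba⟩ ⟨c, hc, hca⟩
    have hb' : b = a := hba.lt_or_eq.elim (fun h => absurd (ha.2 b h) hb.1) id
    have hc' : c = a := hca.lt_or_eq.elim (fun h => absurd (ha.2 c h) hc.1) id
    exact Subtype.ext (hb'.trans hc'.symm)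
  exact Nat.card_unique

lemma Iic_isAtom_iff {y : S} (b : Set.Iic y) : IsAtom b ↔ IsAtom b.1 := by
  have hbotv : ((⊥ : Set.Iic y) : S) = (⊥ : S) := Set.Iic.coe_bot _
  constructor
  · rintro ⟨h1, h2⟩
    refine ⟨fun hc => h1 (Subtype.ext (hc.trans hbotv.symm)), fun c hc => ?_⟩
    have := h2 ⟨c, hc.le.trans b.2⟩ (Subtype.mk_lt_mk.mpr hc)
    exact (congrArg Subtype.val this).trans hbotv
  · rintro ⟨h1, h2⟩
    refine ⟨fun hc => h1 ((congrArg Subtype.val hc).trans hbotv), fun c hc => ?_⟩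
    have : c.1 = ⊥ := h2 c.1 (Subtype.mk_lt_mk.mp (by exact hc))
    exact Subtype.ext (this.trans hbotv.symm)

lemma bot_mem_mlb {a x : S} (ha : IsAtom a) (hax : ¬ a ≤ x) : (⊥ : S) ∈ mlb x a := by
  refine ⟨bot_le, bot_le, fun m hmx hma _ => ?_⟩
  rcases hma.lt_or_eq with h | h
  · exact ha.2 m h
  · exact absurd (h ▸ hmx) hax

variable {y : S} (F : Set.Iic y ≃o Set {a : S // IsAtom a ∧ a ≤ y})

lemma F_top_eq : F ⟨y, le_rfl⟩ = Set.univ := by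
  apply Set.eq_univ_of_univ_subset
  calc Set.univ = F (F.symm Set.univ) := (F.apply_symm_apply _).symm
    _ ⊆ F ⟨y, le_rfl⟩ := F.monotone (F.symm Set.univ).2

lemma mem_mub_of_union_univ (z₁ z₂ : Set.Iic y)
    (hU : F z₁ ∪ F z₂ = Set.univ) : y ∈ mub z₁.1 z₂.1 := by
  refine ⟨z₁.2, z₂.2, fun v h1 h2 hvy => ?_⟩
  have hv : F ⟨v, hvy⟩ = Set.univ := by
    apply Set.eq_univ_of_univ_subset
    rw [← hU]
    exact Set.union_subset (F.monotone (show z₁ ≤ ⟨v, hvy⟩ from h1))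
      (F.monotone (show z₂ ≤ ⟨v, hvy⟩ from h2))
  have : (⟨v, hvy⟩ : Set.Iic y) = ⟨y, le_rfl⟩ := F.injective (hv.trans (F_top_eq F).symm)
  exact congrArg Subtype.val this

lemma mem_mlb_of_inter (z₁ z₂ m : Set.Iic y)
    (hm : F m = F z₁ ∩ F z₂) : m.1 ∈ mlb z₁.1 z₂.1 := by
  have h1 : m ≤ z₁ := F.le_iff_le.mp (hm ▸ Set.inter_subset_left)
  have h2 : m ≤ z₂ := F.le_iff_le.mp (hm ▸ Set.inter_subset_right)
  refine ⟨h1, h2, fun m' hm1 hm2 hmm => ?_⟩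
  have hm'y : m' ≤ y := hm1.trans z₁.2
  have hsub : F ⟨m', hm'y⟩ ⊆ F m := by
    rw [hm]
    exact Set.subset_inter (F.monotone (show (⟨m', hm'y⟩ : Set.Iic y) ≤ z₁ from hm1))
      (F.monotone (show (⟨m', hm'y⟩ : Set.Iic y) ≤ z₂ from hm2))
  have hsub2 : F m ⊆ F ⟨m', hm'y⟩ := F.monotone (show m ≤ ⟨m', hm'y⟩ from hmm)
  have : (⟨m', hm'y⟩ : Set.Iic y) = m := F.injective (le_antisymm hsub hsub2)
  exact congrArg Subtype.val this

end Aux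

section Aux2

variable {S : Type*} [PartialOrder S] [OrderBot S] [Fintype S]

lemma natRank_strictMono (hs : IsSimplicialPoset S) {z y : S} (hzy : z < y) :
    natRank z < natRank y := by
  obtain ⟨F⟩ := hs y
  have hFz : F ⟨z, hzy.le⟩ ≠ Set.univ := by
    intro hc
    have : (⟨z, hzy.le⟩ : Set.Iic y) = ⟨y, le_rfl⟩ := F.injective (hc.trans (F_top_eq F).symm)
    exact hzy.ne (congrArg Subtype.val this)
  obtain ⟨α, hα⟩ := (Set.ne_univ_iff_exists_notMem _).mp hFz
  set b := F.symm {α} with hbdef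
  have hbA : IsAtom b := (OrderIso.isAtom_iff F.symm {α}).mpr (Set.isAtom_singleton α)
  have hbS : IsAtom b.1 := (Iic_isAtom_iff b).mp hbA
  have hbz : ¬ b.1 ≤ z := by
    intro hc
    have : F b ⊆ F ⟨z, hzy.le⟩ := F.monotone (show b ≤ ⟨z, hzy.le⟩ from hc)
    rw [hbdef, F.apply_symm_apply] at this
    exact hα (this rfl)
  have hsub : {a : S | IsAtom a ∧ a ≤ z} ⊂ {a : S | IsAtom a ∧ a ≤ y} := by
    constructor
    · rintro a ⟨ha, haz⟩; exact ⟨ha, haz.trans hzy.le⟩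
    · intro hc
      exact hbz (hc ⟨hbS, b.2⟩).2
  have e1 : natRank z = {a : S | IsAtom a ∧ a ≤ z}.ncard := by
    rw [natRank, ← Nat.card_coe_set_eq]; rfl
  have e2 : natRank y = {a : S | IsAtom a ∧ a ≤ y}.ncard := by
    rw [natRank, ← Nat.card_coe_set_eq]; rfl
  rw [e1, e2]
  exact Set.ncard_lt_ncard hsub (Set.toFinite _)

lemma natRank_le_succ {x j b : S} (hb : IsAtom b)
    (hcond : ∀ a : S, IsAtom a → a ≤ j → a ≤ x ∨ a = b) :
    natRank j ≤ natRank x + 1 := by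
  classical
  have hinj : Function.Injective
      (fun p : {a : S // IsAtom a ∧ a ≤ j} =>
        if h : p.1 ≤ x then some (⟨p.1, p.2.1, h⟩ : {a : S // IsAtom a ∧ a ≤ x}) else none) := by
    rintro ⟨p, hp, hpj⟩ ⟨q, hq, hqj⟩ hpq
    simp only at hpq
    by_cases h1 : p ≤ x <;> by_cases h2 : q ≤ x <;> simp only [h1, h2, dif_pos, dif_neg,
      not_false_iff, Option.some.injEq, Subtype.mk.injEq, reduceCtorEq] at hpq
    · exact Subtype.ext hpq
    · have hp' : p = b := (hcond p hp hpj).resolve_left h1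
      have hq' : q = b := (hcond q hq hqj).resolve_left h2
      exact Subtype.ext (hp'.trans hq'.symm)
  have := Nat.card_le_card_of_injective _ hinj
  rw [Finite.card_option] at this
  exact this

end Aux2

lemma rho_eq_above_basis {S : Type*} [PartialOrder S] [OrderBot S] [Fintype S]
    (ρ : S → ℕ) (h : IsMatroidScheme ρ) (x : S) (hx : x ∈ Bases ρ) :
    ∀ y, x ≤ y → ρ y = ρ x := by
  have hbot : ρ (⊥ : S) = 0 := Nat.le_zero.mp ((h.M1 ⊥).trans_eq natRank_bot')
  suffices H : ∀ n y, natRank y = n → x ≤ y → ρ y = ρ x by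
    intro y hy; exact H _ y rfl hy
  intro n
  induction n using Nat.strong_induction_on with
  | _ n IH =>
  intro y hn hxy
  rcases eq_or_lt_of_le hxy with rfl | hlt
  · rfl
  obtain ⟨F⟩ := h.simplicial y
  set X := F ⟨x, hxy⟩ with hX
  have hXne : X ≠ Set.univ := by
    intro hXu
    have : (⟨x, hxy⟩ : Set.Iic y) = ⟨y, le_rfl⟩ := F.injective (hXu.trans (F_top_eq F).symm)
    exact hlt.ne (congrArg Subtype.val this)
  obtain ⟨α, hα⟩ := (Set.ne_univ_iff_exists_notMem _).mp hXne
  set b := F.symm {α} with hbdef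
  have hbA : IsAtom b := (OrderIso.isAtom_iff F.symm {α}).mpr (Set.isAtom_singleton α)
  have hbS : IsAtom b.1 := (Iic_isAtom_iff b).mp hbA
  have hFb : F b = {α} := F.apply_symm_apply _
  have hbx : ¬ b.1 ≤ x := by
    intro hc
    have : F b ⊆ X := F.monotone (show b ≤ ⟨x, hxy⟩ from hc)
    rw [hFb] at this
    exact hα (this rfl)
  have hρb : ρ b.1 ≤ 1 := (h.M1 b.1).trans_eq (natRank_atom' hbS)
  have hge : ρ x ≤ ρ y := h.M2 hxy
  by_cases hcase : X ∪ {α} = Set.univ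
  · -- y is a minimal upper bound of x and the atom b
    have hmub : y ∈ mub x b.1 := by
      have := mem_mub_of_union_univ F ⟨x, hxy⟩ b (by rw [hFb, ← hX]; exact hcase)
      exact this
    have hmlb : (⊥ : S) ∈ mlb x b.1 := bot_mem_mlb hbS hbx
    have h3 := h.M3 x b.1 y ⊥ hmub hmlb
    rw [hbot] at h3
    rcases Nat.lt_or_ge (ρ y) (ρ x + 1) with h' | h'
    · omega
    -- ρ y = ρ x + 1 : contradiction with maximality of the basis x
    exfalso
    have hcond : ∀ a : S, IsAtom a → a ≤ y → a ≤ x ∨ a = b.1 := by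
      intro a ha hay
      have haI : IsAtom (⟨a, hay⟩ : Set.Iic y) := (Iic_isAtom_iff _).mpr ha
      obtain ⟨β, hβ⟩ := Set.isAtom_iff.mp ((OrderIso.isAtom_iff F _).mpr haI)
      by_cases hβα : β = α
      · right
        have : (⟨a, hay⟩ : Set.Iic y) = b := F.injective (by rw [hβ, hβα, hFb])
        exact congrArg Subtype.val this
      · left
        have hβX : β ∈ X := by
          have hmem : β ∈ X ∪ {α} := hcase ▸ Set.mem_univ β
          rcases hmem with hmem | hmem
          · exact hmem
          · exact absurd hmem hβα
        have hsub : F ⟨a, hay⟩ ⊆ X := by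
          rw [hβ]; exact Set.singleton_subset_iff.mpr hβX
        exact F.le_iff_le.mp (show F ⟨a, hay⟩ ≤ F ⟨x, hxy⟩ from hsub)
    have hrk : natRank y ≤ natRank x + 1 := natRank_le_succ hbS hcond
    have hxind : ρ x = natRank x := hx.1
    have hM1y := h.M1 y
    have hylind : ρ y = natRank y := by omega
    exact hlt.ne' (hx.2 y hylind hxy)
  · -- split y into two strictly smaller pieces above x
    set z₂ := F.symm (X ∪ {α}) with hz2
    set z₁ := F.symm (Set.univ \ {α}) with hz1
    have hFz1 : F z₁ = Set.univ \ {α} := F.apply_symm_apply _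
    have hFz2 : F z₂ = X ∪ {α} := F.apply_symm_apply _
    have hxz1 : x ≤ z₁.1 := by
      have : (⟨x, hxy⟩ : Set.Iic y) ≤ z₁ := F.le_iff_le.mp (by
        rw [hFz1, ← hX]
        intro γ hγ
        exact ⟨Set.mem_univ γ, fun hγα => hα (hγα ▸ hγ)⟩)
      exact this
    have hxz2 : x ≤ z₂.1 := by
      have : (⟨x, hxy⟩ : Set.Iic y) ≤ z₂ := F.le_iff_le.mp (by
        rw [hFz2, ← hX]; exact Set.subset_union_left)
      exact this
    have hz1y : z₁.1 < y := by
      rcases lt_or_eq_of_le z₁.2 with h' | h'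
      · exact h'
      · exfalso
        have : z₁ = ⟨y, le_rfl⟩ := Subtype.ext h'
        rw [this, F_top_eq F] at hFz1
        have : α ∈ Set.univ \ {α} := hFz1 ▸ Set.mem_univ α
        exact this.2 rfl
    have hz2y : z₂.1 < y := by
      rcases lt_or_eq_of_le z₂.2 with h' | h'
      · exact h'
      · exfalso
        have : z₂ = ⟨y, le_rfl⟩ := Subtype.ext h'
        rw [this, F_top_eq F] at hFz2
        exact hcase hFz2.symm
    have h1 : ρ z₁.1 = ρ x :=
      IH (natRank z₁.1) (hn ▸ natRank_strictMono h.simplicial hz1y) z₁.1 rfl hxz1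
    have h2 : ρ z₂.1 = ρ x :=
      IH (natRank z₂.1) (hn ▸ natRank_strictMono h.simplicial hz2y) z₂.1 rfl hxz2
    have hmub : y ∈ mub z₁.1 z₂.1 := by
      apply mem_mub_of_union_univ F z₁ z₂
      rw [hFz1, hFz2]
      ext γ
      simp only [Set.mem_union, Set.mem_diff, Set.mem_univ, Set.mem_singleton_iff, true_and,
        iff_true]
      tauto
    have hmlb : x ∈ mlb z₁.1 z₂.1 := by
      have := mem_mlb_of_inter F z₁ z₂ ⟨x, hxy⟩ (by
        rw [hFz1, hFz2, ← hX]
        ext γ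
        constructor
        · intro hγ
          exact ⟨⟨Set.mem_univ γ, fun hc => hα (hc ▸ hγ)⟩, Or.inl hγ⟩
        · rintro ⟨hγ1, hγ2⟩
          rcases hγ2 with hγ2 | hγ2
          · exact hγ2
          · exact absurd hγ2 hγ1.2)
      exact this
    have h3 := h.M3 z₁.1 z₂.1 y x hmub hmlb
    omega


/-- Corollary 6.4: every basis of a matroid scheme has rank equal to the rank of
the matroid scheme, i.e. to `ρ u` for any maximal element `u` of `S`. -/
theorem statement8 {S : Type*} [PartialOrder S] [OrderBot S] [Fintype S]
    (ρ : S → ℕ) (h : IsMatroidScheme ρ) (x : S) (hx : x ∈ Bases ρ)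
    (u : S) (hu : IsMax u) :
    ρ x = ρ u := by
  obtain ⟨m, hxm, hm⟩ := Finite.exists_le_maximal (α := S) (p := fun _ => True) (a := x) trivial
  have hmmax : IsMax m := fun z hz => hm.2 trivial hz
  have hρm : ρ m = ρ x := rho_eq_above_basis ρ h x hx m hxm
  rcases lt_trichotomy (ρ m) (ρ u) with hlt | heq | hgt
  · obtain ⟨a, _, _, ham, w, hmw, haw, _⟩ := h.M5 m u hlt
    exact absurd (haw.trans (hmmax hmw)) ham
  · omega
  · obtain ⟨a, _, _, hau, w, huw, haw, _⟩ := h.M5 u m hgt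
    exact absurd (haw.trans (hu huw)) hau
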